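/- Let C be a real symmetric n×n matrix and ρ > 0. Then C² + (4/ρ)I is positive definite; let S be its positive semidefinite square root and set X = (1/2)(C + S). Then X is positive definite, X commutes with C, ρ(X − C) = X⁻¹, and X is the unique minimizer of the function Y ↦ −log det Y + (ρ/2)‖Y − C‖_F² over all symmetric positive definite n×n matrices Y. -/

import Mathlib

open Matrix

private lemma posDef_conj_of_isUnit {n : ℕ} {A : Matrix (Fin n) (Fin n) ℝ}
    (hA : A.PosDef) (B : Matrix (Fin n) (Fin n) ℝ) (hB : IsUnit B.det) :
    (B * A * Bᴴ).PosDef := by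
  refine Matrix.PosDef.of_dotProduct_mulVec_pos ?_ fun x hx => ?_
  · rw [Matrix.IsHermitian, conjTranspose_mul, conjTranspose_mul,
      conjTranspose_conjTranspose, hA.1.eq, mul_assoc]
  · have hBH : IsUnit Bᴴ.det := by
      rw [det_conjTranspose]; exact hB.star
    have hx' : Bᴴ *ᵥ x ≠ 0 := by
      intro h
      have hinj : Function.Injective (Bᴴ.mulVec) :=
        Matrix.mulVec_injective_iff_isUnit.mpr ((Matrix.isUnit_iff_isUnit_det _).mpr hBH)
      exact hx (hinj (by simpa using h))
    have : dotProduct (star x) ((B * A * Bᴴ) *ᵥ x)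
        = dotProduct (star (Bᴴ *ᵥ x)) (A *ᵥ (Bᴴ *ᵥ x)) := by
      rw [← mulVec_mulVec, ← mulVec_mulVec, star_mulVec, conjTranspose_conjTranspose,
        ← dotProduct_mulVec]
    rw [this]
    exact hA.dotProduct_mulVec_pos hx'

private lemma trace_eq_sum_eigenvalues' {n : ℕ} {A : Matrix (Fin n) (Fin n) ℝ}
    (hA : A.IsHermitian) : A.trace = ∑ i, hA.eigenvalues i := by
  conv_lhs => rw [hA.spectral_theorem]
  rw [Unitary.conjStarAlgAut_apply, Matrix.trace_mul_cycle, Unitary.coe_star_mul_self, one_mul, Matrix.trace_diagonal]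
  simp [RCLike.ofReal_real_eq_id]

private lemma log_det_le_trace {n : ℕ} {A : Matrix (Fin n) (Fin n) ℝ} (hA : A.PosDef) :
    Real.log A.det ≤ A.trace - n := by
  have hev : ∀ i, 0 < hA.1.eigenvalues i := hA.eigenvalues_pos
  rw [hA.1.det_eq_prod_eigenvalues, trace_eq_sum_eigenvalues' hA.1]
  simp only [RCLike.ofReal_real_eq_id, id_eq]
  rw [Real.log_prod (fun i _ => (hev i).ne')]
  calc ∑ i, Real.log (hA.1.eigenvalues i)
      ≤ ∑ i, (hA.1.eigenvalues i - 1) :=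
        Finset.sum_le_sum fun i _ => Real.log_le_sub_one_of_pos (hev i)
    _ = (∑ i, hA.1.eigenvalues i) - n := by
        rw [Finset.sum_sub_distrib]; simp

open scoped MatrixOrder in
private lemma log_det_sub_le {n : ℕ} {X Y : Matrix (Fin n) (Fin n) ℝ}
    (hX : X.PosDef) (hY : Y.PosDef) :
    Real.log Y.det - Real.log X.det ≤ (X⁻¹ * Y).trace - n := by
  set R := CFC.sqrt X with hRdef
  have hR : R.PosSemidef := Matrix.nonneg_iff_posSemidef.mp (CFC.sqrt_nonneg X)
  have hRR : R * R = X := CFC.sqrt_mul_sqrt_self X hX.posSemidef.nonneg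
  have hXdet : (0:ℝ) < X.det := hX.det_pos
  have hYdet : (0:ℝ) < Y.det := hY.det_pos
  have hRdet : R.det ≠ 0 := by
    intro h
    have h2 := congrArg Matrix.det hRR
    rw [det_mul, h, mul_zero] at h2
    exact hXdet.ne h2
  have hRH : Rᴴ = R := hR.1
  have hRinvH : (R⁻¹)ᴴ = R⁻¹ := by rw [conjTranspose_nonsing_inv, hRH]
  have hRinvdet : IsUnit (R⁻¹).det := by
    rw [det_nonsing_inv, Ring.inverse_eq_inv]
    exact isUnit_iff_ne_zero.mpr (inv_ne_zero hRdet)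
  have hApd : (R⁻¹ * Y * R⁻¹).PosDef := by
    have := posDef_conj_of_isUnit hY R⁻¹ hRinvdet
    rwa [hRinvH] at this
  have hdetR2 : R.det * R.det = X.det := by rw [← det_mul, hRR]
  have hdetA : (R⁻¹ * Y * R⁻¹).det = Y.det / X.det := by
    rw [det_mul, det_mul, det_nonsing_inv, Ring.inverse_eq_inv, ← hdetR2]
    field_simp
  have htrA : (R⁻¹ * Y * R⁻¹).trace = (X⁻¹ * Y).trace := by
    rw [Matrix.trace_mul_cycle, ← Matrix.mul_inv_rev, hRR]
  have h := log_det_le_trace hApd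
  rw [hdetA, htrA, Real.log_div hYdet.ne' hXdet.ne'] at h
  exact h

private lemma sum_mul_eq_trace {n : ℕ} {A : Matrix (Fin n) (Fin n) ℝ} (B : Matrix (Fin n) (Fin n) ℝ)
    (hA : A.IsSymm) :
    ∑ i, ∑ j, A i j * B i j = (A * B).trace := by
  have hs : ∀ i j, A i j = A j i := fun i j => hA.apply j i
  calc ∑ i, ∑ j, A i j * B i j
      = ∑ j, ∑ i, A i j * B i j := Finset.sum_comm ..
    _ = ∑ j, ∑ i, A j i * B i j :=
        Finset.sum_congr rfl fun j _ => Finset.sum_congr rfl fun i _ => by rw [hs i j]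
    _ = (A * B).trace := by
        rw [Matrix.trace]
        simp [Matrix.diag, Matrix.mul_apply]

theorem matrix_L_update (n : ℕ) (ρ : ℝ) (hρ : 0 < ρ)
    (C S X : Matrix (Fin n) (Fin n) ℝ) (hC : C.IsSymm)
    (hS : S.PosSemidef) (hS2 : S * S = C * C + (4 / ρ) • 1)
    (hX : X = (1 / 2 : ℝ) • (C + S)) :
    (C * C + (4 / ρ) • (1 : Matrix (Fin n) (Fin n) ℝ)).PosDef ∧
    X.PosDef ∧
    X * C = C * X ∧
    ρ • (X - C) = X⁻¹ ∧
    ∀ Y : Matrix (Fin n) (Fin n) ℝ, Y.IsSymm → Y.PosDef →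
      (-Real.log X.det + ρ / 2 * (∑ i, ∑ j, (X i j - C i j) ^ 2) ≤
          -Real.log Y.det + ρ / 2 * (∑ i, ∑ j, (Y i j - C i j) ^ 2)) ∧
      ((-Real.log Y.det + ρ / 2 * (∑ i, ∑ j, (Y i j - C i j) ^ 2) =
          -Real.log X.det + ρ / 2 * (∑ i, ∑ j, (X i j - C i j) ^ 2)) → Y = X) := by
  have hc : (0:ℝ) < 4 / ρ := by positivity
  have hC' : C.IsHermitian := by
    rwa [Matrix.IsHermitian, conjTranspose_eq_transpose_of_trivial]
  have hsmul1 : ∀ c : ℝ, c • (1 : Matrix (Fin n) (Fin n) ℝ) = Matrix.diagonal (fun _ => c) := by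
    intro c; ext i j
    by_cases h : i = j <;> simp [Matrix.one_apply, Matrix.diagonal_apply, h]
  -- Part 1
  have hCCpsd : (C * C).PosSemidef := by
    have := Matrix.posSemidef_conjTranspose_mul_self C
    rwa [hC'.eq] at this
  have hIpd : ((4/ρ) • (1 : Matrix (Fin n) (Fin n) ℝ)).PosDef := by
    rw [hsmul1]
    exact Matrix.PosDef.diagonal fun _ => hc
  have hMpd : (C * C + (4 / ρ) • (1 : Matrix (Fin n) (Fin n) ℝ)).PosDef :=
    Matrix.PosDef.posSemidef_add hCCpsd hIpd
  -- Spectral data for C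
  set U : Matrix (Fin n) (Fin n) ℝ := (hC'.eigenvectorUnitary : Matrix (Fin n) (Fin n) ℝ) with hU
  set d : Fin n → ℝ := hC'.eigenvalues with hd
  have hUU : star U * U = 1 := Unitary.coe_star_mul_self _
  have hUU' : U * star U = 1 := Unitary.coe_mul_star_self _
  have hCspec : C = U * Matrix.diagonal d * star U := by
    conv_lhs => rw [hC'.spectral_theorem]
    rw [RCLike.ofReal_real_eq_id, Function.id_comp, Unitary.conjStarAlgAut_apply]
  have cm : ∀ f h : Fin n → ℝ,
      (U * Matrix.diagonal f * star U) * (U * Matrix.diagonal h * star U)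
        = U * Matrix.diagonal (f * h) * star U := by
    intro f h
    simp only [Matrix.mul_assoc]
    rw [← Matrix.mul_assoc (star U) U, hUU, one_mul,
      ← Matrix.mul_assoc (Matrix.diagonal f) (Matrix.diagonal h),
      Matrix.diagonal_mul_diagonal]
    rfl
  set g : Fin n → ℝ := fun i => Real.sqrt (d i ^ 2 + 4/ρ) with hgdef
  have hgnn : ∀ i, 0 ≤ g i := fun i => Real.sqrt_nonneg _
  have hgsq : ∀ i, g i * g i = d i ^ 2 + 4/ρ := fun i =>
    Real.mul_self_sqrt (by positivity)
  have hdg : ∀ i, d i < g i := by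
    intro i
    have h1 : |d i| < g i := by
      rw [← Real.sqrt_sq_eq_abs]
      exact Real.sqrt_lt_sqrt (sq_nonneg _) (by linarith)
    calc d i ≤ |d i| := le_abs_self _
      _ < g i := h1
  have hUdet : IsUnit U.det := by
    refine isUnit_iff_exists_inv.mpr ⟨(star U).det, ?_⟩
    rw [← det_mul, hUU', det_one]
  have hdiagconst : U * Matrix.diagonal (fun _ : Fin n => (4/ρ : ℝ)) * star U
      = (4/ρ) • (1 : Matrix (Fin n) (Fin n) ℝ) := by
    rw [← hsmul1, Matrix.mul_smul, mul_one, Matrix.smul_mul, hUU']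
  have hT2 : (U * Matrix.diagonal g * star U) * (U * Matrix.diagonal g * star U)
      = C * C + (4/ρ) • 1 := by
    rw [cm]
    have hgg : Matrix.diagonal (g * g)
        = Matrix.diagonal (d * d) + Matrix.diagonal (fun _ => (4/ρ : ℝ)) := by
      have hfun : g * g = d * d + fun _ => (4/ρ : ℝ) := by
        funext i
        simp only [Pi.mul_apply, Pi.add_apply]
        rw [hgsq i]; ring
      rw [hfun, Matrix.diagonal_add]
      rfl
    rw [hgg, Matrix.mul_add, Matrix.add_mul, hdiagconst]
    congr 1
    rw [hCspec, cm]
  have hTpsd : (U * Matrix.diagonal g * star U).PosSemidef := by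
    have := (Matrix.posSemidef_diagonal_iff.mpr hgnn).mul_mul_conjTranspose_same U
    rwa [← Matrix.star_eq_conjTranspose] at this
  have hST : S = U * Matrix.diagonal g * star U := by
    open scoped MatrixOrder in
    rw [← CFC.sqrt_sq S hS.nonneg, pow_two, hS2, ← hT2, ← pow_two, CFC.sqrt_sq _ hTpsd.nonneg]
  -- X spectral form
  set e : Fin n → ℝ := fun i => (d i + g i)/2 with hedef
  have he : ∀ i, 0 < e i := by
    intro i
    have h1 : |d i| < g i := by
      rw [← Real.sqrt_sq_eq_abs]
      exact Real.sqrt_lt_sqrt (sq_nonneg _) (by linarith)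
    have h2 : -d i ≤ |d i| := neg_le_abs _
    show 0 < (d i + g i) / 2
    linarith
  have hXspec : X = U * Matrix.diagonal e * star U := by
    have hfun2 : (1/2 : ℝ) • (fun i => d i + g i) = e := by
      funext i
      show (1/2 : ℝ) * (d i + g i) = (d i + g i)/2
      ring
    rw [hX, hCspec, hST, ← Matrix.add_mul, ← Matrix.mul_add, Matrix.diagonal_add, ← hfun2,
      Matrix.diagonal_smul, Matrix.mul_smul, Matrix.smul_mul]
  have hXpd : X.PosDef := by
    rw [hXspec]
    have := posDef_conj_of_isUnit (Matrix.PosDef.diagonal he) U hUdet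
    rwa [← Matrix.star_eq_conjTranspose] at this
  -- commutation
  have hXC : X * C = C * X := by
    rw [hXspec]
    conv_lhs => rw [hCspec]
    conv_rhs => rw [hCspec]
    rw [cm, cm, mul_comm]
  have hSC : S * C = C * S := by
    rw [hST]
    conv_lhs => rw [hCspec]
    conv_rhs => rw [hCspec]
    rw [cm, cm, mul_comm]
  -- inverse identity
  have hXmC : X - C = (1/2 : ℝ) • (S - C) := by
    rw [hX]; ext i j
    simp only [Matrix.sub_apply, Matrix.add_apply, Matrix.smul_apply, smul_eq_mul]
    ring
  have hprod : (S - C) * (C + S) = (4/ρ) • 1 := by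
    rw [Matrix.sub_mul, Matrix.mul_add, Matrix.mul_add, hSC, hS2]
    abel
  have hleft : (ρ • (X - C)) * X = 1 := by
    rw [hXmC, hX, smul_smul, Matrix.smul_mul, Matrix.mul_smul, hprod, smul_smul, smul_smul]
    rw [show ρ * (1/2) * (1/2) * (4/ρ) = 1 by field_simp; ring]
    rw [one_smul]
  have hinv : ρ • (X - C) = X⁻¹ := (Matrix.inv_eq_left_inv hleft).symm
  refine ⟨hMpd, hXpd, hXC, hinv, ?_⟩
  -- minimization
  intro Y hYsymm hYpd
  have hXt : Xᵀ = X := by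
    have := hXpd.1
    rwa [← conjTranspose_eq_transpose_of_trivial]
  have hYXsymm : (Y - X).IsSymm := by
    rw [Matrix.IsSymm, Matrix.transpose_sub, hYsymm.eq, hXt]
  have hXdetpos := hXpd.det_pos
  have hXinvX : X⁻¹ * X = 1 := Matrix.nonsing_inv_mul X hXdetpos.ne'.isUnit
  have hsplit : ∑ i, ∑ j, (Y i j - C i j)^2
      = (∑ i, ∑ j, (Y i j - X i j)^2)
        + 2*(∑ i, ∑ j, (Y i j - X i j)*(X i j - C i j))
        + ∑ i, ∑ j, (X i j - C i j)^2 := by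
    have hsum : ∀ i j : Fin n, (Y i j - C i j)^2
        = ((Y i j - X i j)^2 + 2*((Y i j - X i j) * (X i j - C i j))) + (X i j - C i j)^2 :=
      fun i j => by ring
    simp_rw [hsum, Finset.sum_add_distrib, ← Finset.mul_sum]
  have h1 : ∑ i, ∑ j, (Y i j - X i j)*(X i j - C i j) = ((Y - X) * (X - C)).trace := by
    rw [← sum_mul_eq_trace (X - C) hYXsymm]
    simp [Matrix.sub_apply]
  have h3 : ρ * ((Y - X) * (X - C)).trace = (X⁻¹ * Y).trace - n := by
    have : ρ • ((Y - X) * (X - C)) = (Y - X) * X⁻¹ := by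
      rw [← hinv, Matrix.mul_smul]
    calc ρ * ((Y - X) * (X - C)).trace = (ρ • ((Y - X) * (X - C))).trace := by
          rw [Matrix.trace_smul, smul_eq_mul]
      _ = ((Y - X) * X⁻¹).trace := by rw [this]
      _ = (X⁻¹ * (Y - X)).trace := Matrix.trace_mul_comm _ _
      _ = (X⁻¹ * Y).trace - n := by
          rw [Matrix.mul_sub, Matrix.trace_sub, hXinvX, Matrix.trace_one]
          simp
  have key := log_det_sub_le hXpd hYpd
  have hQnonneg : (0:ℝ) ≤ ∑ i, ∑ j, (Y i j - X i j)^2 :=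
    Finset.sum_nonneg fun i _ => Finset.sum_nonneg fun j _ => sq_nonneg _
  have hB : ρ/2 * (∑ i, ∑ j, (Y i j - C i j)^2)
      = ρ/2 * (∑ i, ∑ j, (Y i j - X i j)^2)
        + ρ * (∑ i, ∑ j, (Y i j - X i j)*(X i j - C i j))
        + ρ/2 * (∑ i, ∑ j, (X i j - C i j)^2) := by
    rw [hsplit]; ring
  have hρcr : ρ * (∑ i, ∑ j, (Y i j - X i j)*(X i j - C i j)) = (X⁻¹ * Y).trace - n := by
    rw [h1, h3]
  have hQ' : (0:ℝ) ≤ ρ/2 * (∑ i, ∑ j, (Y i j - X i j)^2) := by positivity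
  constructor
  · linarith
  · intro heq
    have hQ0 : (∑ i, ∑ j, (Y i j - X i j)^2) = 0 := by
      have hle : ρ/2 * (∑ i, ∑ j, (Y i j - X i j)^2) ≤ 0 := by linarith
      by_contra hq
      have hpos : 0 < ∑ i, ∑ j, (Y i j - X i j)^2 := lt_of_le_of_ne hQnonneg (Ne.symm hq)
      nlinarith
    have hz : ∀ i ∈ (Finset.univ : Finset (Fin n)), ∑ j, (Y i j - X i j)^2 = 0 :=
      (Finset.sum_eq_zero_iff_of_nonneg fun i _ =>
        Finset.sum_nonneg fun j _ => sq_nonneg _).mp hQ0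
    ext i j
    have hz2 := (Finset.sum_eq_zero_iff_of_nonneg fun j _ => sq_nonneg _).mp
      (hz i (Finset.mem_univ i)) j (Finset.mem_univ j)
    have h0 : Y i j - X i j = 0 := pow_eq_zero_iff two_ne_zero |>.mp hz2
    linarith
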